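/- Let X be a compact Hausdorff space, A a unital C*-algebra, and E a *-subalgebra of C(X,A) whose uniform closure contains the constant function 1_X. Let x ∈ X and δ > 0. Then for every selfadjoint f ∈ Δ₂(E) there exist selfadjoint g, h in the uniform closure of E such that g(x) = f(x) = h(x) and g − δ·1_X ≤ f ≤ h + δ·1_X (pointwise in the order of selfadjoint elements of A). -/

import Mathlib

noncomputable section

variable {X A : Type*}

/-- `Δ₂(E)`: all `u ∈ C(X, A)` that can be approximated by members of `E` at every pair of
points of `X`. -/
def Delta2 [TopologicalSpace X] [CompactSpace X] [CStarAlgebra A]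
    (E : Set C(X, A)) : Set C(X, A) :=
  {u | ∀ x y : X, ∀ ε : ℝ, 0 < ε → ∃ v ∈ E, ‖v x - u x‖ < ε ∧ ‖v y - u y‖ < ε}

namespace SWAux

section Eval

variable {Y B : Type*} [TopologicalSpace Y] [CompactSpace Y] [CStarAlgebra B]

/-- Evaluation as a star algebra homomorphism. -/
def evalSAH (z : Y) : C(Y, B) →⋆ₐ[ℂ] B where
  toFun u := u z
  map_one' := rfl
  map_mul' _ _ := rfl
  map_zero' := rfl
  map_add' _ _ := rfl
  commutes' _ := rfl
  map_star' _ := rfl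

lemma isSelfAdjoint_apply {b : C(Y, B)} (hb : IsSelfAdjoint b) (z : Y) :
    IsSelfAdjoint (b z) := by
  have := congrFun (congrArg DFunLike.coe hb.star_eq) z
  exact (by simpa [ContinuousMap.star_apply] using this : star (b z) = b z)

instance instCFCContMap : ContinuousFunctionalCalculus ℝ C(Y, B) IsSelfAdjoint :=
  IsSelfAdjoint.instContinuousFunctionalCalculus

lemma cfc_eval (z : Y) (b : C(Y, B)) (hb : IsSelfAdjoint b) (φ : ℝ → ℝ) (hφ : Continuous φ) :
    (cfc φ b) z = cfc φ (b z) :=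
  StarAlgHomClass.map_cfc (evalSAH z) φ b hφ.continuousOn
    (ContinuousEvalConst.continuous_eval_const z) hb (isSelfAdjoint_apply hb z)

end Eval

section Mem

variable {B : Type*} [CStarAlgebra B]

lemma cfc_mem_of_closed {S : StarSubalgebra ℂ B} (hS : IsClosed (S : Set B))
    {b : B} (hb : b ∈ S) (hbsa : IsSelfAdjoint b) (φ : ℝ → ℝ) (hφ : Continuous φ) :
    cfc φ b ∈ S := by
  have hbn : IsStarNormal b := hbsa.isStarNormal
  rw [cfc_real_eq_complex φ hbsa]
  have hcont : ContinuousOn (fun x : ℂ => (φ x.re : ℂ)) (spectrum ℂ b) :=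
    Continuous.continuousOn (by continuity)
  rw [cfc_apply (fun x : ℂ => (φ x.re : ℂ)) b hbn hcont, cfcHom_eq_of_isStarNormal]
  exact StarAlgebra.elemental.le_of_mem hS hb (SetLike.coe_mem _)

lemma re_approx {a b : B} (hb : IsSelfAdjoint b) {ε : ℝ} (h : ‖a - b‖ < ε) :
    ‖(2⁻¹ : ℂ) • (a + star a) - b‖ < ε := by
  have key : (2⁻¹ : ℂ) • (a + star a) - b = (2⁻¹ : ℂ) • ((a - b) + star (a - b)) := by
    rw [star_sub, hb.star_eq]
    module
  rw [key, norm_smul]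
  have h2 : ‖(2⁻¹ : ℂ)‖ = 2⁻¹ := by
    rw [norm_inv]
    norm_num
  rw [h2]
  calc 2⁻¹ * ‖(a - b) + star (a - b)‖ ≤ 2⁻¹ * (‖a - b‖ + ‖star (a - b)‖) := by
        have := norm_add_le (a - b) (star (a - b))
        nlinarith [norm_nonneg ((a - b) + star (a - b))]
  _ = ‖a - b‖ := by rw [norm_star]; ring
  _ < ε := h

lemma isSelfAdjoint_re_smul {a : B} : IsSelfAdjoint ((2⁻¹ : ℂ) • (a + star a)) := by
  have h1 : IsSelfAdjoint (a + star a) := by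
    rw [IsSelfAdjoint, star_add, star_star, add_comm]
  have hr : star (2⁻¹ : ℂ) = 2⁻¹ := by
    rw [star_inv₀, Complex.star_def, Complex.conj_ofNat]
  exact IsSelfAdjoint.smul hr h1

end Mem

section Order

variable {A : Type*} [CStarAlgebra A] [PartialOrder A] [StarOrderedRing A]

lemma nonneg_smul_one {r : ℝ} (hr : 0 ≤ r) : (0 : A) ≤ r • 1 := by
  have h := star_mul_self_nonneg ((Real.sqrt r) • (1 : A))
  have heq : star ((Real.sqrt r) • (1 : A)) * ((Real.sqrt r) • (1 : A)) = r • (1 : A) := by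
    rw [star_smul, star_one, smul_mul_smul_comm, one_mul]
    rw [star_trivial, Real.mul_self_sqrt hr]
  rwa [heq] at h

lemma smul_one_mono {r s : ℝ} (h : r ≤ s) : (r : ℝ) • (1 : A) ≤ s • 1 := by
  have h2 := nonneg_smul_one (A := A) (sub_nonneg.mpr h)
  rw [sub_smul] at h2
  exact sub_nonneg.mp h2

lemma le_smul_one_of_norm_le {a : A} (ha : IsSelfAdjoint a) {r : ℝ} (h : ‖a‖ ≤ r) :
    a ≤ r • 1 := by
  calc a ≤ algebraMap ℝ A ‖a‖ := ha.le_algebraMap_norm_self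
  _ = ‖a‖ • 1 := Algebra.algebraMap_eq_smul_one _
  _ ≤ r • 1 := smul_one_mono h

lemma neg_smul_one_le_of_norm_le {a : A} (ha : IsSelfAdjoint a) {r : ℝ} (h : ‖a‖ ≤ r) :
    -(r • 1) ≤ a := by
  have h2 := le_smul_one_of_norm_le ha.neg ((norm_neg a).le.trans h)
  have h3 := neg_le_neg h2
  rwa [neg_neg] at h3

lemma le_add_smul_one_of_norm_le {a b : A} (hab : IsSelfAdjoint (a - b)) {r : ℝ}
    (h : ‖a - b‖ ≤ r) : a ≤ b + r • 1 := by
  have h1 := le_smul_one_of_norm_le hab h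
  have := add_le_add_left h1 b
  rwa [sub_add_cancel, add_comm] at this

lemma sub_smul_one_le_of_norm_le {a b : A} (hab : IsSelfAdjoint (a - b)) {r : ℝ}
    (h : ‖a - b‖ ≤ r) : b - r • 1 ≤ a := by
  have h1 := neg_smul_one_le_of_norm_le hab h
  have := add_le_add_left h1 b
  rwa [neg_add_eq_sub, sub_add_cancel] at this

/-- positive-part function -/
abbrev posf : ℝ → ℝ := fun t => max t 0

lemma posf_continuous : Continuous posf := by fun_prop

lemma cfc_posf_nonneg {a : A} : 0 ≤ cfc posf a :=
  cfc_nonneg fun t _ => le_max_right t 0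

lemma le_cfc_posf {a : A} (ha : IsSelfAdjoint a) : a ≤ cfc posf a := by
  conv_lhs => rw [← cfc_id ℝ a ha]
  exact cfc_mono (fun t _ => le_max_left t 0)

lemma cfc_posf_le {a : A} (ha : IsSelfAdjoint a) {β : ℝ} (hβ : 0 ≤ β) (h : a ≤ β • 1) :
    cfc posf a ≤ β • 1 := by
  rw [← Algebra.algebraMap_eq_smul_one] at h ⊢
  refine cfc_le_algebraMap _ _ _ (fun t ht => ?_)
  exact max_le ((le_algebraMap_iff_spectrum_le ha).mp h t ht) hβ

/-- clamp function -/
abbrev clampf (s : ℝ) : ℝ → ℝ := fun t => max (-s) (min t s)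

lemma clampf_continuous (s : ℝ) : Continuous (clampf s) := by fun_prop

lemma abs_clampf_le {s : ℝ} (hs : 0 ≤ s) (t : ℝ) : |clampf s t| ≤ s := by
  rw [abs_le]
  constructor
  · exact le_max_left _ _
  · exact max_le (by linarith) (min_le_right t s)

lemma cfc_clampf_eq_self {a : A} (ha : IsSelfAdjoint a) {s : ℝ}
    (h1 : -(s • 1) ≤ a) (h2 : a ≤ s • 1) : cfc (clampf s) a = a := by
  rw [← Algebra.algebraMap_eq_smul_one] at h1 h2
  rw [← map_neg (algebraMap ℝ A)] at h1
  have hspec : ∀ t ∈ spectrum ℝ a, -s ≤ t ∧ t ≤ s := fun t ht =>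
    ⟨(algebraMap_le_iff_le_spectrum ha).mp h1 t ht,
     (le_algebraMap_iff_spectrum_le ha).mp h2 t ht⟩
  have heqon : (spectrum ℝ a).EqOn (clampf s) id := fun t ht => by
    obtain ⟨hl, hu⟩ := hspec t ht
    simp only [clampf, id_eq, min_eq_left hu, max_eq_right hl]
  rw [cfc_congr heqon, cfc_id ℝ a ha]

omit [PartialOrder A] [StarOrderedRing A] in
lemma norm_cfc_clampf_le (a : A) {s : ℝ} (hs : 0 ≤ s) : ‖cfc (clampf s) a‖ ≤ s :=
  norm_cfc_le hs fun t _ => by simpa using abs_clampf_le hs t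

omit [PartialOrder A] [StarOrderedRing A] in
lemma cfc_clampf_isSelfAdjoint (a : A) (s : ℝ) : IsSelfAdjoint (cfc (clampf s) a) :=
  cfc_predicate _ _

omit [PartialOrder A] [StarOrderedRing A] in
lemma cfc_posf_isSelfAdjoint (a : A) : IsSelfAdjoint (cfc posf a) :=
  cfc_predicate _ _

lemma neg_smul_one_le_cfc_clampf (a : A) {s : ℝ} (hs : 0 ≤ s) :
    -(s • 1) ≤ cfc (clampf s) a :=
  neg_smul_one_le_of_norm_le (cfc_clampf_isSelfAdjoint a s) (norm_cfc_clampf_le a hs)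

end Order

section Main

variable {X A : Type*} [TopologicalSpace X] [CompactSpace X] [T2Space X] [CStarAlgebra A]
    [PartialOrder A] [StarOrderedRing A]

set_option maxHeartbeats 2000000 in
/-- The key one–sided approximation: an `h` in the closure of `E`, selfadjoint, agreeing with
`f` at `x`, with `f ≤ h + δ` everywhere. -/
lemma upper_approx (E : NonUnitalStarSubalgebra ℂ C(X, A))
    (h1 : (1 : C(X, A)) ∈ closure (E : Set C(X, A)))
    (x : X) (δ : ℝ) (hδ : 0 < δ)
    (f : C(X, A)) (hf : f ∈ Delta2 (E : Set C(X, A))) (hfsa : IsSelfAdjoint f) :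
    ∃ h ∈ closure (E : Set C(X, A)), IsSelfAdjoint h ∧ h x = f x ∧
      ∀ z : X, f z ≤ h z + δ • (1 : A) := by
  -- the closed star subalgebra given by the closure of `E`
  classical
  let S : StarSubalgebra ℂ C(X, A) :=
    { E.topologicalClosure.toNonUnitalSubalgebra with
      carrier := closure (E : Set C(X, A))
      one_mem' := h1
      algebraMap_mem' := fun c => by
        have : (c : ℂ) • (1 : C(X, A)) ∈ E.topologicalClosure :=
          SMulMemClass.smul_mem c h1
        rw [Algebra.algebraMap_eq_smul_one]
        exact this
      star_mem' := fun {u} hu => map_mem_closure continuous_star hu fun _ hv => star_mem hv }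
  have hS_closed : IsClosed (S : Set C(X, A)) := isClosed_closure
  have hES : (E : Set C(X, A)) ⊆ (S : Set C(X, A))  := subset_closure
  -- selfadjoint two-point approximants
  have happrox : ∀ (y z : X) (ε' : ℝ), 0 < ε' → ∃ v : C(X, A), v ∈ (E : Set C(X, A)) ∧
      IsSelfAdjoint v ∧ ‖v y - f y‖ < ε' ∧ ‖v z - f z‖ < ε' := by
    intro y z ε' hε'
    obtain ⟨v, hvE, hvy, hvz⟩ := hf y z ε' hε'
    refine ⟨(2⁻¹ : ℂ) • (v + star v), ?_, isSelfAdjoint_re_smul, ?_, ?_⟩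
    · exact SMulMemClass.smul_mem _ (add_mem hvE (star_mem hvE))
    · have : ((2⁻¹ : ℂ) • (v + star v)) y = (2⁻¹ : ℂ) • (v y + star (v y)) := by
        simp [ContinuousMap.smul_apply, ContinuousMap.add_apply, ContinuousMap.star_apply]
      rw [this]
      exact re_approx (isSelfAdjoint_apply hfsa y) hvy
    · have : ((2⁻¹ : ℂ) • (v + star v)) z = (2⁻¹ : ℂ) • (v z + star (v z)) := by
        simp [ContinuousMap.smul_apply, ContinuousMap.add_apply, ContinuousMap.star_apply]
      rw [this]
      exact re_approx (isSelfAdjoint_apply hfsa z) hvz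
  set ε : ℝ := δ / 8 with hε_def
  have hε : 0 < ε := by positivity
  set γ : ℕ → ℝ := fun k => ε / 2 ^ k with hγ_def
  have hγpos : ∀ k, 0 < γ k := fun k => by positivity
  have hγle : ∀ k, γ k ≤ ε := fun k => by
    rw [hγ_def]
    have h2 : (1 : ℝ) ≤ 2 ^ k := one_le_pow₀ (by norm_num)
    rw [div_le_iff₀ (by positivity)]
    nlinarith
  have hγhalf : ∀ k, γ (k + 1) = γ k / 2 := fun k => by
    rw [hγ_def]
    simp [pow_succ]
    ring
  -- choose the pairwise approximants and the covering
  choose v hvE hvsa hvx hvy using fun y : X => happrox x y ε hε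
  have huex : ∀ k : ℕ, ∃ u0 : C(X, A), u0 ∈ (E : Set C(X, A)) ∧ IsSelfAdjoint u0 ∧
      ‖u0 x - f x‖ < γ (k + 1) := by
    intro k
    obtain ⟨u0, ha, hb, hc, -⟩ := happrox x x (γ (k + 1)) (hγpos (k + 1))
    exact ⟨u0, ha, hb, hc⟩
  choose u huE husa hux using huex
  let U : X → Set X := fun y => {z | ‖v y z - f z‖ < ε}
  have hUopen : ∀ y, IsOpen (U y) := by
    intro y
    have hcont : Continuous fun z => ‖v y z - f z‖ := ((v y).continuous.sub f.continuous).norm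
    exact isOpen_Iio.preimage hcont
  obtain ⟨t, ht⟩ := isCompact_univ.elim_finite_subcover U hUopen
    (fun z _ => Set.mem_iUnion.mpr ⟨z, hvy z⟩)
  set L : List X := t.toList with hL_def
  set n : ℕ := L.length with hn_def
  set idx : ℕ → X := fun k => L.getD k x with hidx_def
  have hcov : ∀ z : X, ∃ k, k < n ∧ ‖v (idx k) z - f z‖ < ε := by
    intro z
    have := ht (Set.mem_univ z)
    rw [Set.mem_iUnion₂] at this
    obtain ⟨y, hyt, hyz⟩ := this
    have hyL : y ∈ L := by rwa [hL_def, Finset.mem_toList]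
    obtain ⟨k, hk, hky⟩ := List.mem_iff_getElem.mp hyL
    refine ⟨k, hk, ?_⟩
    rw [hidx_def]
    simp only [List.getD_eq_getElem?_getD, List.getElem?_eq_getElem hk, Option.getD_some, hky]
    exact hyz
  have hn : 0 < n := (hcov x).choose_spec.1.trans_le' (Nat.zero_le _)
  -- the corrected local approximants `w k`
  set s : ℕ → ℝ := fun k => ε + γ (k + 1) with hs_def
  have hspos : ∀ k, 0 < s k := fun k => by positivity
  set d : ℕ → C(X, A) := fun k => u k - v (idx k) with hd_def
  have hdS : ∀ k, d k ∈ S := fun k => S.sub_mem (hES (huE k)) (hES (hvE (idx k)))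
  have hdsa : ∀ k, IsSelfAdjoint (d k) := fun k => (husa k).sub (hvsa (idx k))
  set w : ℕ → C(X, A) := fun k => v (idx k) + cfc (clampf (s k)) (d k) with hw_def
  have hwS : ∀ k, w k ∈ S := fun k =>
    S.add_mem (hES (hvE (idx k)))
      (cfc_mem_of_closed hS_closed (hdS k) (hdsa k) _ (clampf_continuous (s k)))
  have hwsa : ∀ k, IsSelfAdjoint (w k) := fun k =>
    (hvsa (idx k)).add (cfc_clampf_isSelfAdjoint (d k) (s k))
  have hdx : ∀ k z, (d k) z = u k z - v (idx k) z := fun k z => rfl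
  have hweval : ∀ k z, w k z = v (idx k) z + cfc (clampf (s k)) ((d k) z) := by
    intro k z
    rw [hw_def]
    simp only [ContinuousMap.add_apply]
    rw [cfc_eval z (d k) (hdsa k) _ (clampf_continuous (s k))]
  have hwx : ∀ k, w k x = u k x := by
    intro k
    rw [hweval k x, hdx k x]
    have hsa : IsSelfAdjoint (u k x - v (idx k) x) :=
      (isSelfAdjoint_apply (husa k) x).sub (isSelfAdjoint_apply (hvsa (idx k)) x)
    have hnorm : ‖u k x - v (idx k) x‖ ≤ s k := by
      have : u k x - v (idx k) x = (u k x - f x) - (v (idx k) x - f x) := by abel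
      rw [this]
      calc ‖(u k x - f x) - (v (idx k) x - f x)‖ ≤ ‖u k x - f x‖ + ‖v (idx k) x - f x‖ :=
            norm_sub_le _ _
      _ ≤ s k := by
            rw [hs_def]
            have := hux k
            have := hvx (idx k)
            simp only []
            linarith
    rw [cfc_clampf_eq_self hsa (neg_smul_one_le_of_norm_le hsa hnorm)
      (le_smul_one_of_norm_le hsa hnorm)]
    abel
  have hwnear : ∀ k z, ‖w k z - v (idx k) z‖ ≤ s k := by
    intro k z
    rw [hweval k z]
    rw [add_sub_cancel_left]
    exact norm_cfc_clampf_le _ (hspos k).le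
  have hwxf : ∀ k, ‖w k x - f x‖ < γ (k + 1) := fun k => by rw [hwx k]; exact hux k
  -- the max-fold
  set F : ℕ → C(X, A) :=
    fun k => Nat.rec (w 0) (fun k Fk => Fk + cfc posf (w (k + 1) - Fk)) k with hF_def
  have hF0 : F 0 = w 0 := rfl
  have hFsucc : ∀ k, F (k + 1) = F k + cfc posf (w (k + 1) - F k) := fun k => rfl
  have hFS : ∀ k, F k ∈ S ∧ IsSelfAdjoint (F k) := by
    intro k
    induction k with
    | zero => exact ⟨hwS 0, hwsa 0⟩
    | succ k ih =>
      rw [hFsucc k]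
      have hsub : w (k + 1) - F k ∈ S := S.sub_mem (hwS (k + 1)) ih.1
      have hsubsa : IsSelfAdjoint (w (k + 1) - F k) := (hwsa (k + 1)).sub ih.2
      exact ⟨S.add_mem ih.1 (cfc_mem_of_closed hS_closed hsub hsubsa _ posf_continuous),
        ih.2.add (cfc_posf_isSelfAdjoint _)⟩
  have hFeval : ∀ k z, F (k + 1) z = F k z + cfc posf (w (k + 1) z - F k z) := by
    intro k z
    rw [hFsucc k]
    simp only [ContinuousMap.add_apply]
    have hsubsa : IsSelfAdjoint (w (k + 1) - F k) := (hwsa (k + 1)).sub (hFS k).2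
    rw [cfc_eval z _ hsubsa _ posf_continuous]
    simp [ContinuousMap.sub_apply]
  have hFw : ∀ k, ∀ j ≤ k, ∀ z, w j z ≤ F k z := by
    intro k
    induction k with
    | zero =>
      intro j hj z
      interval_cases j
      exact le_refl _
    | succ k ih =>
      intro j hj z
      have hsubsa : IsSelfAdjoint (w (k + 1) z - F k z) :=
        (isSelfAdjoint_apply (hwsa (k + 1)) z).sub (isSelfAdjoint_apply (hFS k).2 z)
      rcases Nat.lt_or_ge j (k + 1) with hlt | hge
      · have := ih j (Nat.lt_succ_iff.mp hlt) z
        rw [hFeval k z]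
        calc w j z ≤ F k z := this
        _ ≤ F k z + cfc posf (w (k + 1) z - F k z) := le_add_of_nonneg_right cfc_posf_nonneg
      · have hj' : j = k + 1 := le_antisymm hj hge
        subst hj'
        rw [hFeval k z]
        have h2 := le_cfc_posf hsubsa
        calc w (k + 1) z = F k z + (w (k + 1) z - F k z) := by abel
        _ ≤ F k z + cfc posf (w (k + 1) z - F k z) := add_le_add_right h2 _
  have hFxl : ∀ k, f x - γ (k + 1) • (1 : A) ≤ F k x := by
    intro k
    have h2 := hFw k k (le_refl k) x
    have h3 : f x - γ (k + 1) • (1 : A) ≤ w k x := by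
      have hsa : IsSelfAdjoint (w k x - f x) :=
        (isSelfAdjoint_apply (hwsa k) x).sub (isSelfAdjoint_apply hfsa x)
      exact sub_smul_one_le_of_norm_le hsa (hwxf k).le
    exact h3.trans h2
  have hFxu : ∀ k, F k x ≤ f x + (2 * ε - 3 * γ (k + 1)) • (1 : A) := by
    intro k
    induction k with
    | zero =>
      rw [hF0]
      have hsa : IsSelfAdjoint (w 0 x - f x) :=
        (isSelfAdjoint_apply (hwsa 0) x).sub (isSelfAdjoint_apply hfsa x)
      have h2 := le_add_smul_one_of_norm_le hsa (hwxf 0).le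
      have h3 : γ 1 ≤ 2 * ε - 3 * γ 1 := by
        have : γ 1 = ε / 2 := by rw [hγ_def]; norm_num
        rw [this]; linarith
      exact h2.trans (add_le_add_right (smul_one_mono h3) _)
    | succ k ih =>
      rw [hFeval k x]
      have hsubsa : IsSelfAdjoint (w (k + 1) x - F k x) :=
        (isSelfAdjoint_apply (hwsa (k + 1)) x).sub (isSelfAdjoint_apply (hFS k).2 x)
      have hwu : w (k + 1) x ≤ f x + γ (k + 2) • (1 : A) := by
        have hsa : IsSelfAdjoint (w (k + 1) x - f x) :=
          (isSelfAdjoint_apply (hwsa (k + 1)) x).sub (isSelfAdjoint_apply hfsa x)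
        exact le_add_smul_one_of_norm_le hsa (hwxf (k + 1)).le
      have hdiff : w (k + 1) x - F k x ≤ (γ (k + 2) + γ (k + 1)) • (1 : A) := by
        have h4 := sub_le_sub hwu (hFxl k)
        calc w (k + 1) x - F k x
            ≤ (f x + γ (k + 2) • (1 : A)) - (f x - γ (k + 1) • (1 : A)) := h4
        _ = (γ (k + 2) + γ (k + 1)) • (1 : A) := by rw [add_smul]; abel
      have h5 : cfc posf (w (k + 1) x - F k x) ≤ (γ (k + 2) + γ (k + 1)) • (1 : A) :=
        cfc_posf_le hsubsa (by positivity) hdiff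
      calc F k x + cfc posf (w (k + 1) x - F k x)
          ≤ (f x + (2 * ε - 3 * γ (k + 1)) • (1 : A)) + (γ (k + 2) + γ (k + 1)) • (1 : A) :=
            add_le_add ih h5
      _ = f x + (2 * ε - 3 * γ (k + 2)) • (1 : A) := by
            rw [add_assoc, ← add_smul]
            congr 2
            have := hγhalf (k + 1)
            linarith
  -- global lower estimate for the fold
  have hglob0 : ∀ z, f z ≤ F (n - 1) z + (3 * ε) • (1 : A) := by
    intro z
    obtain ⟨k, hk, hkz⟩ := hcov z
    have hk' : k ≤ n - 1 := Nat.le_sub_one_of_lt hk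
    have h2 : ‖f z - w k z‖ ≤ 3 * ε := by
      have heq : f z - w k z = (f z - v (idx k) z) - (w k z - v (idx k) z) := by abel
      rw [heq]
      calc ‖(f z - v (idx k) z) - (w k z - v (idx k) z)‖
          ≤ ‖f z - v (idx k) z‖ + ‖w k z - v (idx k) z‖ := norm_sub_le _ _
      _ ≤ 3 * ε := by
            have h3 : ‖f z - v (idx k) z‖ < ε := by rwa [norm_sub_rev]
            have h4 := hwnear k z
            have h5 := hγle (k + 1)
            rw [hs_def] at h4
            simp only [] at h4
            linarith
    have hsa : IsSelfAdjoint (f z - w k z) :=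
      (isSelfAdjoint_apply hfsa z).sub (isSelfAdjoint_apply (hwsa k) z)
    have h6 : f z ≤ w k z + (3 * ε) • (1 : A) := le_add_smul_one_of_norm_le hsa h2
    exact h6.trans (add_le_add_left (hFw (n - 1) k hk' z) _)
  -- the pinning telescope
  set sG : ℕ → ℝ := fun k => γ (k + 1) + 2 * ε / 2 ^ k with hsG_def
  have hsGpos : ∀ k, 0 < sG k := fun k => by positivity
  set G : ℕ → C(X, A) :=
    fun k => Nat.rec (F (n - 1)) (fun k Gk => Gk + cfc (clampf (sG k)) (u k - Gk)) k with hG_def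
  have hG0 : G 0 = F (n - 1) := rfl
  have hGsucc : ∀ k, G (k + 1) = G k + cfc (clampf (sG k)) (u k - G k) := fun k => rfl
  have hGS : ∀ k, G k ∈ S ∧ IsSelfAdjoint (G k) := by
    intro k
    induction k with
    | zero => exact hFS (n - 1)
    | succ k ih =>
      rw [hGsucc k]
      have hsub : u k - G k ∈ S := S.sub_mem (hES (huE k)) ih.1
      have hsubsa : IsSelfAdjoint (u k - G k) := (husa k).sub ih.2
      exact ⟨S.add_mem ih.1
          (cfc_mem_of_closed hS_closed hsub hsubsa _ (clampf_continuous (sG k))),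
        ih.2.add (cfc_clampf_isSelfAdjoint _ _)⟩
  have hGeval : ∀ k z, G (k + 1) z = G k z + cfc (clampf (sG k)) (u k z - G k z) := by
    intro k z
    rw [hGsucc k]
    simp only [ContinuousMap.add_apply]
    have hsubsa : IsSelfAdjoint (u k - G k) := (husa k).sub (hGS k).2
    rw [cfc_eval z _ hsubsa _ (clampf_continuous (sG k))]
    simp [ContinuousMap.sub_apply]
  -- the band invariant at `x`, together with the pinned values
  have hueq : ∀ k, f x - γ (k + 1) • (1 : A) ≤ u k x ∧ u k x ≤ f x + γ (k + 1) • (1 : A) := by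
    intro k
    have hsa : IsSelfAdjoint (u k x - f x) :=
      (isSelfAdjoint_apply (husa k) x).sub (isSelfAdjoint_apply hfsa x)
    exact ⟨sub_smul_one_le_of_norm_le hsa (hux k).le,
      le_add_smul_one_of_norm_le hsa (hux k).le⟩
  have hGband : ∀ k, (f x - (2 * ε / 2 ^ k) • (1 : A) ≤ G k x ∧
      G k x ≤ f x + (2 * ε / 2 ^ k) • (1 : A)) ∧ (0 < k → G k x = u (k - 1) x) := by
    intro k
    induction k with
    | zero =>
      refine ⟨⟨?_, ?_⟩, fun h => absurd h (lt_irrefl 0)⟩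
      · have h2 := hFxl (n - 1)
        rw [hG0]
        have h3 : γ (n - 1 + 1) ≤ 2 * ε / 2 ^ 0 := by
          have := hγle (n - 1 + 1)
          simp only [pow_zero]
          linarith
        calc f x - (2 * ε / 2 ^ 0) • (1 : A) ≤ f x - γ (n - 1 + 1) • (1 : A) := by
              have := smul_one_mono (A := A) h3
              exact sub_le_sub_left this _
        _ ≤ F (n - 1) x := h2
      · have h2 := hFxu (n - 1)
        rw [hG0]
        have h3 : 2 * ε - 3 * γ (n - 1 + 1) ≤ 2 * ε / 2 ^ 0 := by
          have := (hγpos (n - 1 + 1)).le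
          simp only [pow_zero]
          linarith
        exact h2.trans (add_le_add_right (smul_one_mono h3) _)
    | succ k ih =>
      obtain ⟨⟨ihl, ihu⟩, -⟩ := ih
      obtain ⟨hul, huu⟩ := hueq k
      have hsa : IsSelfAdjoint (u k x - G k x) :=
        (isSelfAdjoint_apply (husa k) x).sub (isSelfAdjoint_apply (hGS k).2 x)
      have hupp : u k x - G k x ≤ sG k • (1 : A) := by
        calc u k x - G k x ≤ (f x + γ (k + 1) • (1 : A)) - (f x - (2 * ε / 2 ^ k) • (1 : A)) :=
              sub_le_sub huu ihl
        _ = sG k • (1 : A) := by rw [hsG_def]; simp only [add_smul]; abel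
      have hlow : -(sG k • (1 : A)) ≤ u k x - G k x := by
        have h7 : (f x - γ (k + 1) • (1 : A)) - (f x + (2 * ε / 2 ^ k) • (1 : A)) ≤
            u k x - G k x := sub_le_sub hul ihu
        calc -(sG k • (1 : A))
            = (f x - γ (k + 1) • (1 : A)) - (f x + (2 * ε / 2 ^ k) • (1 : A)) := by
              rw [hsG_def]; simp only [add_smul]; abel
        _ ≤ u k x - G k x := h7
      have heq : G (k + 1) x = u k x := by
        rw [hGeval k x, cfc_clampf_eq_self hsa hlow hupp]
        abel
      have hγ2 : γ (k + 1) ≤ 2 * ε / 2 ^ (k + 1) := by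
        have h2 : (0:ℝ) < 2 ^ (k + 1) := by positivity
        have h3 : γ (k + 1) = ε / 2 ^ (k + 1) := by rw [hγ_def]
        rw [h3, div_le_div_iff₀ h2 h2]
        nlinarith
      refine ⟨⟨?_, ?_⟩, fun _ => by rw [heq]; rfl⟩
      · rw [heq]
        calc f x - (2 * ε / 2 ^ (k + 1)) • (1 : A) ≤ f x - γ (k + 1) • (1 : A) :=
              sub_le_sub_left (smul_one_mono hγ2) _
        _ ≤ u k x := hul
      · rw [heq]
        exact huu.trans (add_le_add_right (smul_one_mono hγ2) _)
  have hGx1 : ∀ k, G (k + 1) x = u k x := by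
    intro k
    exact (hGband (k + 1)).2 (Nat.succ_pos k)
  -- global estimate along the telescope
  have hGglob : ∀ k z, f z ≤ G k z + (8 * ε - 5 * ε / 2 ^ k) • (1 : A) := by
    intro k
    induction k with
    | zero =>
      intro z
      have := hglob0 z
      rw [hG0]
      have h3 : (3 : ℝ) * ε = 8 * ε - 5 * ε / 2 ^ 0 := by rw [pow_zero, div_one]; ring
      rwa [h3] at this
    | succ k ih =>
      intro z
      have hsubsa : IsSelfAdjoint (u k - G k) := (husa k).sub (hGS k).2
      have h2 : -(sG k • (1 : A)) ≤ cfc (clampf (sG k)) (u k z - G k z) :=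
        neg_smul_one_le_cfc_clampf _ (hsGpos k).le
      have h3 : G k z ≤ G (k + 1) z + sG k • (1 : A) := by
        rw [hGeval k z]
        have := add_le_add_left h2 (G k z + sG k • (1 : A))
        calc G k z = G k z + sG k • (1 : A) + -(sG k • (1 : A)) := by abel
        _ ≤ G k z + sG k • (1 : A) + cfc (clampf (sG k)) (u k z - G k z) := by
              exact add_le_add_right h2 _
        _ = G k z + cfc (clampf (sG k)) (u k z - G k z) + sG k • (1 : A) := by abel
      have harith : sG k + (8 * ε - 5 * ε / 2 ^ k) = 8 * ε - 5 * ε / 2 ^ (k + 1) := by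
        rw [hsG_def, hγ_def]
        have h4 : (2:ℝ) ^ (k+1) = 2 * 2 ^ k := by ring
        field_simp
        ring
      calc f z ≤ G k z + (8 * ε - 5 * ε / 2 ^ k) • (1 : A) := ih z
      _ ≤ (G (k + 1) z + sG k • (1 : A)) + (8 * ε - 5 * ε / 2 ^ k) • (1 : A) :=
            add_le_add_left h3 _
      _ = G (k + 1) z + (8 * ε - 5 * ε / 2 ^ (k + 1)) • (1 : A) := by
            rw [add_assoc, ← add_smul, harith]
  -- the telescope is Cauchy
  have hGdist : ∀ k, ‖G (k + 1) - G k‖ ≤ 5 * ε / 2 * (2⁻¹ : ℝ) ^ k := by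
    intro k
    have h2 : G (k + 1) - G k = cfc (clampf (sG k)) (u k - G k) := by
      rw [hGsucc k]; abel
    have h3 : sG k = 5 * ε / 2 * (2⁻¹ : ℝ) ^ k := by
      rw [hsG_def, hγ_def, inv_pow]
      have h4 : (2:ℝ) ^ (k+1) = 2 * 2 ^ k := by ring
      field_simp
      ring
    rw [h2, ← h3]
    exact norm_cfc_clampf_le _ (hsGpos k).le
  have hcauchy : CauchySeq G := by
    apply cauchySeq_of_le_geometric (2⁻¹ : ℝ) (5 * ε / 2) (by norm_num)
    intro k
    rw [dist_eq_norm, norm_sub_rev]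
    exact hGdist k
  obtain ⟨H, hH⟩ := cauchySeq_tendsto_of_complete hcauchy
  -- properties of the limit
  have hHmem : H ∈ closure (E : Set C(X, A)) :=
    isClosed_closure.mem_of_tendsto hH (Filter.Eventually.of_forall fun k => (hGS k).1)
  have hHsa : IsSelfAdjoint H := by
    have hclosed : IsClosed {b : C(X, A) | IsSelfAdjoint b} :=
      isClosed_eq continuous_star continuous_id
    exact hclosed.mem_of_tendsto hH (Filter.Eventually.of_forall fun k => (hGS k).2)
  have heval : Filter.Tendsto (fun k => G k x) Filter.atTop (nhds (H x)) :=
    ((ContinuousEvalConst.continuous_eval_const x).tendsto H).comp hH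
  have hshift : Filter.Tendsto (fun k => G (k + 1) x) Filter.atTop (nhds (H x)) :=
    heval.comp (Filter.tendsto_add_atTop_nat 1)
  have hγtendsto : Filter.Tendsto (fun k => γ (k + 1)) Filter.atTop (nhds 0) := by
    have hhalf : Filter.Tendsto (fun k : ℕ => (2⁻¹ : ℝ) ^ k) Filter.atTop (nhds 0) :=
      tendsto_pow_atTop_nhds_zero_of_lt_one (by norm_num) (by norm_num)
    have h2 := hhalf.const_mul ε
    rw [mul_zero] at h2
    have h3 : (fun k : ℕ => γ (k + 1)) = (fun k : ℕ => ε * (2⁻¹:ℝ) ^ k) ∘ (fun k => k + 1) := by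
      funext k
      simp only [Function.comp_apply, hγ_def, inv_pow]
      ring
    rw [h3]
    exact h2.comp (Filter.tendsto_add_atTop_nat 1)
  have hux_tendsto : Filter.Tendsto (fun k => u k x) Filter.atTop (nhds (f x)) := by
    rw [tendsto_iff_norm_sub_tendsto_zero]
    exact squeeze_zero (fun k => norm_nonneg _) (fun k => (hux k).le) hγtendsto
  have hHx : H x = f x := by
    have h2 : (fun k => G (k + 1) x) = fun k => u k x := funext hGx1
    rw [h2] at hshift
    exact tendsto_nhds_unique hshift hux_tendsto
  refine ⟨H, hHmem, hHsa, hHx, ?_⟩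
  intro z
  have hall : ∀ k, f z - δ • (1 : A) ≤ G k z := by
    intro k
    have h2 : 8 * ε - 5 * ε / 2 ^ k ≤ δ := by
      rw [hε_def]
      have h3 : (0:ℝ) < 2 ^ k := by positivity
      have h4 : 0 ≤ 5 * (δ / 8) / 2 ^ k := by positivity
      linarith
    have := (hGglob k z).trans (add_le_add_right (smul_one_mono h2) _)
    exact sub_le_iff_le_add.mpr this
  have hclosed : IsClosed {a : A | f z - δ • (1 : A) ≤ a} := isClosed_Ici
  have hevz : Filter.Tendsto (fun k => G k z) Filter.atTop (nhds (H z)) :=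
    ((ContinuousEvalConst.continuous_eval_const z).tendsto H).comp hH
  have := hclosed.mem_of_tendsto hevz (Filter.Eventually.of_forall hall)
  exact sub_le_iff_le_add.mp this

end Main

end SWAux

/-- Lemma 2.6: if `1_X` belongs to the uniform closure of `E`, then every selfadjoint
`f ∈ Δ₂(E)` admits selfadjoint `g, h` in the closure of `E` with `g x = f x = h x` and
`g - δ·1_X ≤ f ≤ h + δ·1_X`. -/
theorem exists_selfAdjoint_approx_le_of_mem_delta2
    [TopologicalSpace X] [CompactSpace X] [T2Space X] [CStarAlgebra A]
    [PartialOrder A] [StarOrderedRing A]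
    (E : NonUnitalStarSubalgebra ℂ C(X, A))
    (h1 : (1 : C(X, A)) ∈ closure (E : Set C(X, A)))
    (x : X) (δ : ℝ) (hδ : 0 < δ)
    (f : C(X, A)) (hf : f ∈ Delta2 (E : Set C(X, A))) (hfsa : IsSelfAdjoint f) :
    ∃ g ∈ closure (E : Set C(X, A)), ∃ h ∈ closure (E : Set C(X, A)),
      IsSelfAdjoint g ∧ IsSelfAdjoint h ∧
      g x = f x ∧ h x = f x ∧
      (∀ z : X, g z - δ • (1 : A) ≤ f z) ∧ (∀ z : X, f z ≤ h z + δ • (1 : A)) := by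
  obtain ⟨h, hhmem, hhsa, hhx, hhle⟩ := SWAux.upper_approx E h1 x δ hδ f hf hfsa
  have hnf : (-f) ∈ Delta2 (E : Set C(X, A)) := by
    intro y z ε' hε'
    obtain ⟨v, hv, h1', h2'⟩ := hf y z ε' hε'
    refine ⟨-v, neg_mem hv, ?_, ?_⟩
    · have : (-v) y - (-f) y = -(v y - f y) := by
        simp only [ContinuousMap.neg_apply]
        abel
      rwa [this, norm_neg]
    · have : (-v) z - (-f) z = -(v z - f z) := by
        simp only [ContinuousMap.neg_apply]
        abel
      rwa [this, norm_neg]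
  obtain ⟨h', hh'mem, hh'sa, hh'x, hh'le⟩ := SWAux.upper_approx E h1 x δ hδ (-f) hnf hfsa.neg
  refine ⟨-h', ?_, h, hhmem, hh'sa.neg, hhsa, ?_, hhx, ?_, hhle⟩
  · exact map_mem_closure continuous_neg hh'mem fun _ hv => neg_mem hv
  · rw [ContinuousMap.neg_apply, hh'x, ContinuousMap.neg_apply, neg_neg]
  · intro z
    have h2 := hh'le z
    rw [ContinuousMap.neg_apply] at h2 ⊢
    have h3 := neg_le_neg h2
    rw [neg_neg] at h3
    calc -h' z - δ • (1 : A) = -(h' z + δ • (1 : A)) := by abel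
    _ ≤ f z := h3

end
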